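/- Let G₁, G₂, G₃ be simple graphs on a common set V with no rainbow triangle, and let X ⊆ V be a set of size ℓ such that the induced subgraph G₃[X] has a perfect matching. Then e₁(X) + e₂(X) ≤ ℓ²/2, where eᵢ(X) denotes the number of edges of Gᵢ with both ends in X. -/

import Mathlib

/-- A rainbow triangle for graphs `G₁ G₂ G₃` on a common vertex set: distinct vertices
`v₁ v₂ v₃` with `v₁v₂ ∈ E(G₁)`, `v₂v₃ ∈ E(G₂)`, `v₃v₁ ∈ E(G₃)`. -/
def HasRainbowTriangle {V : Type*} (G₁ G₂ G₃ : SimpleGraph V) : Prop :=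
  ∃ v₁ v₂ v₃ : V, v₁ ≠ v₂ ∧ v₂ ≠ v₃ ∧ v₃ ≠ v₁ ∧
    G₁.Adj v₁ v₂ ∧ G₂.Adj v₂ v₃ ∧ G₃.Adj v₃ v₁

/-- Number of edges of `G` with both endpoints in `X`. -/
noncomputable def edgesWithin {V : Type*} (G : SimpleGraph V) (X : Set V) : ℕ :=
  {e ∈ G.edgeSet | ∀ v ∈ e, v ∈ X}.ncard

/-- Number of edges of `G` with one endpoint in `X` and the other in `Y`. -/
noncomputable def edgesBetween {V : Type*} (G : SimpleGraph V) (X Y : Set V) : ℕ :=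
  {e ∈ G.edgeSet | ∃ x ∈ X, ∃ y ∈ Y, e = s(x, y)}.ncard

/-- The subgraph of `G` induced on `X` has a perfect matching. -/
def HasPerfectMatchingOn {V : Type*} (G : SimpleGraph V) (X : Set V) : Prop :=
  ∃ M : Set (Sym2 V), M ⊆ G.edgeSet ∧ (∀ e ∈ M, ∀ v ∈ e, v ∈ X) ∧
    ∀ x ∈ X, ∃! e, e ∈ M ∧ x ∈ e
open Finset

private def restr {V : Type*} (G : SimpleGraph V) (X : Set V) : SimpleGraph V where
  Adj v w := G.Adj v w ∧ v ∈ X ∧ w ∈ X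
  symm := ⟨fun v w h => ⟨h.1.symm, h.2.2, h.2.1⟩⟩
  loopless := ⟨fun v h => G.loopless.irrefl v h.1⟩

private lemma edgeSet_restr {V : Type*} (G : SimpleGraph V) (X : Set V) :
    {e ∈ G.edgeSet | ∀ v ∈ e, v ∈ X} = (restr G X).edgeSet := by
  ext e
  induction e using Sym2.ind with
  | _ a b =>
    simp only [Set.mem_sep_iff, SimpleGraph.mem_edgeSet, Sym2.mem_iff, restr]
    constructor
    · rintro ⟨h, hx⟩; exact ⟨h, hx a (Or.inl rfl), hx b (Or.inr rfl)⟩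
    · rintro ⟨h, ha, hb⟩; refine ⟨h, ?_⟩; rintro v (rfl | rfl) <;> assumption

private lemma exists_rep' {V : Type*} {G : SimpleGraph V} {e : Sym2 V} (h : e ∈ G.edgeSet) :
    ∃ a b, G.Adj a b ∧ e = s(a, b) := by
  induction e using Sym2.ind with
  | _ a b => exact ⟨a, b, h, rfl⟩

theorem inside_edges_bound_of_perfect_matching {V : Type*} [Fintype V]
    (G₁ G₂ G₃ : SimpleGraph V) (hNR : ¬ HasRainbowTriangle G₁ G₂ G₃)
    (X : Set V) (ℓ : ℕ) (hℓ : X.ncard = ℓ) (hPM : HasPerfectMatchingOn G₃ X) :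
    (edgesWithin G₁ X : ℝ) + (edgesWithin G₂ X : ℝ) ≤ (ℓ : ℝ) ^ 2 / 2 := by
  classical
  obtain ⟨M, hMe, hMX, hMu⟩ := hPM
  -- key: no v, a, b with G₃.Adj a b, G₁.Adj v a, G₂.Adj v b
  have hkey : ∀ v a b, G₃.Adj a b → G₁.Adj v a → G₂.Adj v b → False := by
    intro v a b hab h1 h2
    exact hNR ⟨a, v, b, h1.ne', h2.ne, hab.ne', h1.symm, h2, hab.symm⟩
  -- the matching function
  have hchoice : ∀ w : V, w ∈ X → ∃ e, (e ∈ M ∧ w ∈ e) := fun w hw => ⟨(hMu w hw).choose, (hMu w hw).choose_spec.1⟩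
  set f : V → Sym2 V := fun w => if h : w ∈ X then (hMu w h).choose else s(w, w) with hf
  have hf1 : ∀ w ∈ X, f w ∈ M ∧ w ∈ f w := by
    intro w hw; simp only [hf, dif_pos hw]; exact (hMu w hw).choose_spec.1
  have hf2 : ∀ w ∈ X, ∀ e ∈ M, w ∈ e → e = f w := by
    intro w hw e he hwe; simp only [hf, dif_pos hw]
    exact (hMu w hw).choose_spec.2 e ⟨he, hwe⟩
  set Xf : Finset V := X.toFinset with hXf
  set Mf : Finset (Sym2 V) := M.toFinset with hMf
  have hXcard : Xf.card = ℓ := by rw [hXf, ← Set.ncard_eq_toFinset_card', hℓ]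
  -- 2|M| ≤ ℓ
  have hMcard : 2 * Mf.card ≤ ℓ := by
    rw [← hXcard]
    refine mul_card_image_le_card_of_maps_to (f := f) (t := Mf) ?_ 2 ?_
    · intro w hw
      rw [hMf, Set.mem_toFinset]
      exact (hf1 w (by rwa [hXf, Set.mem_toFinset] at hw)).1
    · intro e heMf
      rw [hMf, Set.mem_toFinset] at heMf
      obtain ⟨a, b, hab, rfl⟩ := exists_rep' (hMe heMf)
      have haX : a ∈ X := hMX _ heMf a (by simp)
      have hbX : b ∈ X := hMX _ heMf b (by simp)
      have h2 : ({a, b} : Finset V) ⊆ {w ∈ Xf | f w = s(a, b)} := by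
        intro w hw
        simp only [Finset.mem_insert, Finset.mem_singleton] at hw
        rcases hw with rfl | rfl <;>
          simp only [Finset.mem_filter, hXf, Set.mem_toFinset] <;>
          refine ⟨by assumption, (hf2 _ (by assumption) _ heMf (by simp)).symm⟩
      calc 2 = ({a, b} : Finset V).card := by rw [Finset.card_insert_of_notMem (by simpa using hab.ne), Finset.card_singleton]
        _ ≤ _ := Finset.card_le_card h2
  -- pair sets
  set S₁ : Finset (V × V) := univ.filter (fun (x, y) => (restr G₁ X).Adj x y) with hS₁
  set S₂ : Finset (V × V) := univ.filter (fun (x, y) => (restr G₂ X).Adj x y) with hS₂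
  have hcard1 : 2 * edgesWithin G₁ X = S₁.card := by
    rw [edgesWithin, edgeSet_restr, ← SimpleGraph.coe_edgeFinset, Set.ncard_coe_finset,
      SimpleGraph.two_mul_card_edgeFinset, hS₁]
  have hcard2 : 2 * edgesWithin G₂ X = S₂.card := by
    rw [edgesWithin, edgeSet_restr, ← SimpleGraph.coe_edgeFinset, Set.ncard_coe_finset,
      SimpleGraph.two_mul_card_edgeFinset, hS₂]
  -- double counting
  set T : Finset ((V × V) ⊕ (V × V)) := S₁.disjSum S₂ with hT
  set g : (V × V) ⊕ (V × V) → V × Sym2 V :=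
    Sum.elim (fun p => (p.1, f p.2)) (fun p => (p.1, f p.2)) with hg
  have hmaps : ∀ q ∈ T, g q ∈ Xf ×ˢ Mf := by
    rintro (p | p) hq <;>
      [rw [hT, Finset.inl_mem_disjSum, hS₁] at hq; rw [hT, Finset.inr_mem_disjSum, hS₂] at hq] <;>
      · simp only [Finset.mem_filter, Finset.mem_univ, true_and] at hq
        obtain ⟨-, h1, h2⟩ : _ ∧ _ ∧ _ := hq
        simp only [hg, Sum.elim_inl, Sum.elim_inr, Finset.mem_product, hXf, hMf,
          Set.mem_toFinset]
        exact ⟨h1, (hf1 _ h2).1⟩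
  have hfiber : ∀ q ∈ Xf ×ˢ Mf, {x ∈ T | g x = q}.card ≤ 2 := by
    rintro ⟨v, e⟩ hq
    simp only [Finset.mem_product, hMf, Set.mem_toFinset] at hq
    obtain ⟨hv, heM⟩ := hq
    obtain ⟨a, b, hab, rfl⟩ := exists_rep' (hMe heM)
    -- elements of the fiber
    have hmem : ∀ x ∈ {x ∈ T | g x = (v, s(a, b))},
        x = Sum.inl (v, a) ∨ x = Sum.inl (v, b) ∨ x = Sum.inr (v, a) ∨ x = Sum.inr (v, b) := by
      rintro (p | p) hx <;>
        · rw [Finset.mem_filter] at hx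
          obtain ⟨hxT, hgx⟩ := hx
          simp only [hg, Sum.elim_inl, Sum.elim_inr, Prod.mk.injEq] at hgx
          obtain ⟨h1, h2⟩ := hgx
          first
          | (rw [hT, Finset.inl_mem_disjSum, hS₁] at hxT;
             simp only [Finset.mem_filter, Finset.mem_univ, true_and] at hxT)
          | (rw [hT, Finset.inr_mem_disjSum, hS₂] at hxT;
             simp only [Finset.mem_filter, Finset.mem_univ, true_and] at hxT)
          obtain ⟨-, -, hpX⟩ : _ ∧ _ ∧ _ := hxT
          have : p.2 ∈ s(a, b) := h2 ▸ (hf1 p.2 hpX).2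
          rw [Sym2.mem_iff] at this
          have hp : p = (v, a) ∨ p = (v, b) := by
            rcases this with rfl | rfl
            · exact Or.inl (by rw [← h1])
            · exact Or.inr (by rw [← h1])
          rcases hp with rfl | rfl <;> simp
    -- adjacency extraction
    have hadj1 : ∀ w, Sum.inl (v, w) ∈ {x ∈ T | g x = (v, s(a, b))} → G₁.Adj v w := by
      intro w hx
      rw [Finset.mem_filter, hT, Finset.inl_mem_disjSum, hS₁] at hx
      simp only [Finset.mem_filter, Finset.mem_univ, true_and] at hx
      exact (hx.1 : _ ∧ _).1
    have hadj2 : ∀ w, Sum.inr (v, w) ∈ {x ∈ T | g x = (v, s(a, b))} → G₂.Adj v w := by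
      intro w hx
      rw [Finset.mem_filter, hT, Finset.inr_mem_disjSum, hS₂] at hx
      simp only [Finset.mem_filter, Finset.mem_univ, true_and] at hx
      exact (hx.1 : _ ∧ _).1
    set F := {x ∈ T | g x = (v, s(a, b))} with hF
    have hsub : F ⊆ ({Sum.inl (v, a), Sum.inr (v, b)} ∪ {Sum.inl (v, b), Sum.inr (v, a)} : Finset _) := by
      intro x hx
      rcases hmem x hx with rfl | rfl | rfl | rfl <;> simp
    calc F.card = ((F ∩ {Sum.inl (v, a), Sum.inr (v, b)}) ∪ (F ∩ {Sum.inl (v, b), Sum.inr (v, a)})).card := by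
          rw [← Finset.inter_union_distrib_left, Finset.inter_eq_left.2 hsub]
      _ ≤ (F ∩ {Sum.inl (v, a), Sum.inr (v, b)}).card + (F ∩ {Sum.inl (v, b), Sum.inr (v, a)}).card :=
          Finset.card_union_le _ _
      _ ≤ 1 + 1 := by
          gcongr
          · rw [Finset.card_le_one]
            intro x hx y hy
            rw [Finset.mem_inter, Finset.mem_insert, Finset.mem_singleton] at hx hy
            rcases hx.2 with rfl | rfl <;> rcases hy.2 with rfl | rfl <;> try rfl
            · exact (hkey v a b hab (hadj1 a hx.1) (hadj2 b hy.1)).elim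
            · exact (hkey v a b hab (hadj1 a hy.1) (hadj2 b hx.1)).elim
          · rw [Finset.card_le_one]
            intro x hx y hy
            rw [Finset.mem_inter, Finset.mem_insert, Finset.mem_singleton] at hx hy
            rcases hx.2 with rfl | rfl <;> rcases hy.2 with rfl | rfl <;> try rfl
            · exact (hkey v b a hab.symm (hadj1 b hx.1) (hadj2 a hy.1)).elim
            · exact (hkey v b a hab.symm (hadj1 b hy.1) (hadj2 a hx.1)).elim
      _ = 2 := rfl
  have hTcard : T.card ≤ 2 * (Xf ×ˢ Mf).card :=
    Finset.card_le_mul_card_image_of_maps_to hmaps 2 hfiber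
  have hfinal : 2 * (edgesWithin G₁ X + edgesWithin G₂ X) ≤ ℓ * ℓ := by
    have h1 : 2 * (edgesWithin G₁ X + edgesWithin G₂ X) = T.card := by
      rw [hT, Finset.card_disjSum, ← hcard1, ← hcard2]; ring
    rw [h1]
    calc T.card ≤ 2 * (Xf ×ˢ Mf).card := hTcard
      _ = Xf.card * (2 * Mf.card) := by rw [Finset.card_product]; ring
      _ ≤ ℓ * ℓ := by rw [hXcard]; exact Nat.mul_le_mul_left ℓ hMcard
  have := (Nat.cast_le (α := ℝ)).2 hfinal
  push_cast at this
  nlinarith [this]
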